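/- Let F : F_2^n → F_2^n be an APN function, a ∈ F_2^n nonzero, λ ∈ F_2, and w = |{x ∈ F_2^n : a·F(x) = λ}|. Then there exists a Sidon set of size 2^n − w in F_2^{2n−1}. -/

import Mathlib

def IsSidon {G : Type*} [AddCommGroup G] (M : Set G) : Prop :=
  ∀ m₁ ∈ M, ∀ m₂ ∈ M, ∀ m₃ ∈ M, ∀ m₄ ∈ M,
    m₁ ≠ m₂ → m₁ ≠ m₃ → m₁ ≠ m₄ → m₂ ≠ m₃ → m₂ ≠ m₄ → m₃ ≠ m₄ →
      m₁ + m₂ + m₃ + m₄ ≠ 0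

def IsAPN {n : ℕ} (F : (Fin n → ZMod 2) → (Fin n → ZMod 2)) : Prop :=
  ∀ a : Fin n → ZMod 2, a ≠ 0 → ∀ b : Fin n → ZMod 2,
    (Finset.univ.filter (fun x => F x + F (x + a) = b)).card ≤ 2

def dot {t : ℕ} (a b : Fin t → ZMod 2) : ZMod 2 := ∑ i, a i * b i

def psiAux {m : ℕ} (F : (Fin (m+1) → ZMod 2) → (Fin (m+1) → ZMod 2)) (i0 : Fin (m+1))
    (x : Fin (m+1) → ZMod 2) : Fin (2*(m+1)-1) → ZMod 2 :=
  fun j => if h : (j : ℕ) < m+1 then x ⟨j, h⟩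
    else F x (i0.succAbove ⟨(j:ℕ) - (m+1), by have := j.isLt; omega⟩)

lemma psi_lt {m : ℕ} (F : (Fin (m+1) → ZMod 2) → (Fin (m+1) → ZMod 2)) (i0 : Fin (m+1))
    (x : Fin (m+1) → ZMod 2) (i : Fin (m+1)) :
    psiAux F i0 x ⟨i.val, by have := i.isLt; omega⟩ = x i := by
  simp [psiAux, i.isLt]

lemma psi_ge {m : ℕ} (F : (Fin (m+1) → ZMod 2) → (Fin (m+1) → ZMod 2)) (i0 : Fin (m+1))
    (x : Fin (m+1) → ZMod 2) (k : Fin m) :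
    psiAux F i0 x ⟨m+1+k.val, by have := k.isLt; omega⟩ = F x (i0.succAbove k) := by
  simp [psiAux]
  intro h; exact absurd h (by omega)

lemma psi_inj {m : ℕ} (F : (Fin (m+1) → ZMod 2) → (Fin (m+1) → ZMod 2)) (i0 : Fin (m+1)) :
    Function.Injective (psiAux F i0) := by
  intro x y h
  funext i
  have := congrFun h ⟨i.val, by have := i.isLt; omega⟩
  rwa [psi_lt, psi_lt] at this

lemma dot_add' {t : ℕ} (a u v : Fin t → ZMod 2) : dot a (u + v) = dot a u + dot a v := by
  simp [dot, mul_add, Finset.sum_add_distrib]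

theorem stmt_15 {n : ℕ} (hn : 1 ≤ n) (F : (Fin n → ZMod 2) → (Fin n → ZMod 2))
    (hF : IsAPN F) (a : Fin n → ZMod 2) (ha : a ≠ 0) (lam : ZMod 2) :
    ∃ N : Finset (Fin (2 * n - 1) → ZMod 2),
      IsSidon (N : Set (Fin (2 * n - 1) → ZMod 2)) ∧
      N.card = 2 ^ n - (Finset.univ.filter (fun x => dot a (F x) = lam)).card := by
  obtain ⟨m, rfl⟩ : ∃ m, n = m + 1 := ⟨n - 1, by omega⟩
  obtain ⟨i0, hi0⟩ : ∃ i, a i = 1 := by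
    by_contra h
    push_neg at h
    apply ha
    funext i
    have h2 := h i
    have key : ∀ s : ZMod 2, s ≠ 1 → s = 0 := by decide
    exact key _ h2
  refine ⟨(Finset.univ.filter
      (fun x => ¬ dot a (F x) = lam)).image (psiAux F i0), ?_, ?_⟩
  · -- Sidon
    intro m1 hm1 m2 hm2 m3 hm3 m4 hm4 h12 h13 h14 h23 h24 h34 heq
    simp only [Finset.coe_image, Set.mem_image, Finset.mem_coe] at hm1 hm2 hm3 hm4
    obtain ⟨x1, hx1S, rfl⟩ := hm1
    obtain ⟨x2, hx2S, rfl⟩ := hm2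
    obtain ⟨x3, hx3S, rfl⟩ := hm3
    obtain ⟨x4, hx4S, rfl⟩ := hm4
    have hne12 : x1 ≠ x2 := fun h => h12 (by rw [h])
    have hne34 : x3 ≠ x4 := fun h => h34 (by rw [h])
    have hne13 : x1 ≠ x3 := fun h => h13 (by rw [h])
    have hne14 : x1 ≠ x4 := fun h => h14 (by rw [h])
    have hne23 : x2 ≠ x3 := fun h => h23 (by rw [h])
    have hne24 : x2 ≠ x4 := fun h => h24 (by rw [h])
    have hx : x1 + x2 + x3 + x4 = 0 := by
      funext i
      have h := congrFun heq ⟨i.val, by have := i.isLt; omega⟩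
      rw [Pi.add_apply, Pi.add_apply, Pi.add_apply, psi_lt, psi_lt, psi_lt, psi_lt] at h
      simpa using h
    have hgoff : ∀ i, i ≠ i0 → (F x1 + F x2 + F x3 + F x4) i = 0 := by
      intro i hi
      obtain ⟨k, hk⟩ := Fin.exists_succAbove_eq hi
      have h := congrFun heq ⟨m+1+k.val, by have := k.isLt; omega⟩
      rw [Pi.add_apply, Pi.add_apply, Pi.add_apply, psi_ge, psi_ge, psi_ge, psi_ge, hk] at h
      simpa using h
    have hdotval : ∀ x : Fin (m+1) → ZMod 2,
        x ∈ Finset.univ.filter (fun x => ¬ dot a (F x) = lam) → dot a (F x) = lam + 1 := by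
      intro x hx
      rw [Finset.mem_filter] at hx
      have key : ∀ s l : ZMod 2, s ≠ l → s = l + 1 := by decide
      exact key _ _ hx.2
    have hdotg : dot a (F x1 + F x2 + F x3 + F x4) = 0 := by
      rw [dot_add', dot_add', dot_add', hdotval x1 hx1S, hdotval x2 hx2S,
        hdotval x3 hx3S, hdotval x4 hx4S]
      have key : ∀ l : ZMod 2, l + 1 + (l + 1) + (l + 1) + (l + 1) = 0 := by decide
      exact key lam
    have hgi0 : (F x1 + F x2 + F x3 + F x4) i0 = 0 := by
      have hh : dot a (F x1 + F x2 + F x3 + F x4)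
          = a i0 * (F x1 + F x2 + F x3 + F x4) i0 := by
        rw [dot]
        exact Finset.sum_eq_single_of_mem i0 (Finset.mem_univ i0)
          (fun i _ hi => by rw [hgoff i hi, mul_zero])
      rw [hh, hi0, one_mul] at hdotg
      exact hdotg
    have hg0 : F x1 + F x2 + F x3 + F x4 = 0 := by
      funext i
      by_cases h : i = i0
      · rw [h]; exact hgi0
      · exact hgoff i h
    have hu0 : x1 + x2 ≠ 0 := by
      intro h
      apply hne12
      funext i
      have h' := congrFun h i
      rw [Pi.add_apply] at h'
      have key : ∀ s t : ZMod 2, s + t = 0 → s = t := by decide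
      exact key _ _ h'
    have key : ∀ y ∈ ({x1, x2, x3, x4} : Finset (Fin (m+1) → ZMod 2)),
        y ∈ Finset.univ.filter (fun x => F x + F (x + (x1 + x2)) = F x1 + F x2) := by
      have e1 : x1 + (x1 + x2) = x2 := by
        funext i
        simp only [Pi.add_apply]
        have key : ∀ s t : ZMod 2, s + (s + t) = t := by decide
        exact key _ _
      have e2 : x2 + (x1 + x2) = x1 := by
        funext i
        simp only [Pi.add_apply]
        have key : ∀ s t : ZMod 2, t + (s + t) = s := by decide
        exact key _ _
      have e3 : x3 + (x1 + x2) = x4 := by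
        funext i
        simp only [Pi.add_apply]
        have h := congrFun hx i
        simp only [Pi.add_apply, Pi.zero_apply] at h
        have key : ∀ s1 s2 s3 s4 : ZMod 2, s1 + s2 + s3 + s4 = 0 → s3 + (s1 + s2) = s4 := by
          decide
        exact key _ _ _ _ h
      have e4 : x4 + (x1 + x2) = x3 := by
        funext i
        simp only [Pi.add_apply]
        have h := congrFun hx i
        simp only [Pi.add_apply, Pi.zero_apply] at h
        have key : ∀ s1 s2 s3 s4 : ZMod 2, s1 + s2 + s3 + s4 = 0 → s4 + (s1 + s2) = s3 := by
          decide
        exact key _ _ _ _ h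
      have e34 : F x3 + F x4 = F x1 + F x2 := by
        funext i
        have h := congrFun hg0 i
        simp only [Pi.add_apply, Pi.zero_apply] at h ⊢
        have key : ∀ s1 s2 s3 s4 : ZMod 2, s1 + s2 + s3 + s4 = 0 → s3 + s4 = s1 + s2 := by
          decide
        exact key _ _ _ _ h
      intro y hy
      simp only [Finset.mem_insert, Finset.mem_singleton] at hy
      rw [Finset.mem_filter]
      refine ⟨Finset.mem_univ _, ?_⟩
      rcases hy with h | h | h | h
      · rw [h, e1]
      · rw [h, e2, add_comm (F x2) (F x1)]
      · rw [h, e3]; exact e34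
      · rw [h, e4, add_comm (F x4) (F x3)]; exact e34
    have hcard4 : ({x1, x2, x3, x4} : Finset (Fin (m+1) → ZMod 2)).card = 4 := by
      rw [Finset.card_insert_of_notMem (by simp [hne12, hne13, hne14]),
        Finset.card_insert_of_notMem (by simp [hne23, hne24]),
        Finset.card_insert_of_notMem (by simp [hne34]), Finset.card_singleton]
    have hle := Finset.card_le_card (fun y hy => key y hy)
    rw [hcard4] at hle
    have := hF (x1 + x2) hu0 (F x1 + F x2)
    omega
  · -- cardinality
    rw [Finset.card_image_of_injective _ (psi_inj F i0)]
    have hsplit := Finset.card_filter_add_card_filter_not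
      (s := (Finset.univ : Finset (Fin (m+1) → ZMod 2)))
      (p := fun x => dot a (F x) = lam)
    have huniv : (Finset.univ : Finset (Fin (m+1) → ZMod 2)).card = 2 ^ (m+1) := by
      simp [Finset.card_univ]
    rw [huniv] at hsplit
    omega
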